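/- Tropical Pappus intersection lemma: If k ≥ 1 projective lines L_i : l_i x + l_i' y + l_i'' z = 0 over the Puiseux series field, with all coefficients l_i, l_i', l_i'' nonzero, pass through a common point of the projective plane, then the tropicalizations T(L_1), …, T(L_k) ⊂ ℝ² have a common point. -/

import Mathlib

/-- Tropicalization map on the field of Puiseux series (modelled as `HahnSeries ℝ ℂ`). -/
noncomputable def T (x : HahnSeries ℝ ℂ) : ℝ := -x.order

/-- A tropical point `z` (in homogeneous coordinates) lies on the tropical line with
coefficient vector `w` iff the maximum of `w j + z j` is attained at least twice. -/
def OnTropLine (w z : Fin 3 → ℝ) : Prop :=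
  ∃ j j' : Fin 3, j ≠ j' ∧ w j + z j = w j' + z j' ∧ ∀ m, w m + z m ≤ w j + z j

private lemma min_order_twice (a : Fin 3 → HahnSeries ℝ ℂ) (hne : ∀ j, a j ≠ 0)
    (hsum : ∑ j, a j = 0) :
    ∃ j j', j ≠ j' ∧ (a j).order = (a j').order ∧ ∀ m, (a j).order ≤ (a m).order := by
  obtain ⟨j, -, hj⟩ := Finset.exists_min_image Finset.univ (fun j => (a j).order)
    ⟨0, Finset.mem_univ 0⟩
  have hj' : ∀ m, (a j).order ≤ (a m).order := fun m => hj m (Finset.mem_univ m)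
  refine ⟨j, ?_⟩
  by_contra h
  push_neg at h
  have hgt : ∀ m, m ≠ j → (a j).order < (a m).order := by
    intro m hm
    rcases lt_or_eq_of_le (hj' m) with h1 | h1
    · exact h1
    · obtain ⟨m'', hm''⟩ := h m (Ne.symm hm) h1
      exact absurd (hj' m'') (not_le.mpr hm'')
  have h0 : ∀ m, m ≠ j → (a m).coeff ((a j).order) = 0 :=
    fun m hm => HahnSeries.coeff_eq_zero_of_lt_order (hgt m hm)
  have hcj := HahnSeries.coeff_order_eq_zero.not.2 (hne j)
  have hz : (0 : HahnSeries ℝ ℂ).coeff ((a j).order) ≠ 0 := by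
    rw [← hsum, Fin.sum_univ_three, HahnSeries.coeff_add, HahnSeries.coeff_add]
    fin_cases j <;> simp_all
  simp at hz

private lemma fin3_split (j₀ : Fin 3) : ∃ j₁ j₂ : Fin 3, j₀ ≠ j₁ ∧ j₀ ≠ j₂ ∧ j₁ ≠ j₂ ∧
    (∀ j : Fin 3, j = j₀ ∨ j = j₁ ∨ j = j₂) ∧
    ∀ (f : Fin 3 → HahnSeries ℝ ℂ), ∑ j, f j = f j₀ + f j₁ + f j₂ := by
  fin_cases j₀
  · exact ⟨1, 2, by decide, by decide, by decide, by decide,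
      fun f => by rw [Fin.sum_univ_three]; rfl⟩
  · exact ⟨0, 2, by decide, by decide, by decide, by decide,
      fun f => by rw [Fin.sum_univ_three, show ((⟨1, by norm_num⟩ : Fin 3)) = 1 from rfl]; ring⟩
  · exact ⟨0, 1, by decide, by decide, by decide, by decide,
      fun f => by rw [Fin.sum_univ_three, show ((⟨2, by norm_num⟩ : Fin 3)) = 2 from rfl]; ring⟩

theorem tropical_pappus_lemma {k : ℕ} (hk : 1 ≤ k)
    (l : Fin k → Fin 3 → HahnSeries ℝ ℂ)
    (hl : ∀ i j, l i j ≠ 0)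
    (p : Fin 3 → HahnSeries ℝ ℂ) (hp : p ≠ 0)
    (hcommon : ∀ i, ∑ j, l i j * p j = 0) :
    ∃ z : Fin 3 → ℝ, ∀ i, OnTropLine (fun j => T (l i j)) z := by
  by_cases hpz : ∀ j, p j ≠ 0
  · refine ⟨fun j => T (p j), fun i => ?_⟩
    obtain ⟨j, j', hjj, heq, hle⟩ := min_order_twice (fun j => l i j * p j)
      (fun j => mul_ne_zero (hl i j) (hpz j)) (hcommon i)
    simp only [HahnSeries.order_mul (hl i _) (hpz _)] at heq hle
    refine ⟨j, j', hjj, ?_, fun m => ?_⟩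
    · simp only [T]; linarith
    · have := hle m
      simp only [T]; linarith
  · push_neg at hpz
    obtain ⟨j₀, hj₀⟩ := hpz
    obtain ⟨j₁, j₂, h01, h02, h12, hall, hsplit⟩ := fin3_split j₀
    have hcom : ∀ i, l i j₁ * p j₁ + l i j₂ * p j₂ = 0 := by
      intro i
      have hs := hcommon i
      rw [hsplit (fun j => l i j * p j)] at hs
      simpa [hj₀] using hs
    have i0 : Fin k := ⟨0, hk⟩
    have hp1 : p j₁ ≠ 0 := by
      intro h1
      have hs := hcom i0
      rw [h1, mul_zero, zero_add] at hs
      rcases mul_eq_zero.mp hs with h | h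
      · exact hl i0 j₂ h
      · apply hp
        funext j
        rcases hall j with rfl | rfl | rfl <;> simp [hj₀, h1, h]
    have hp2 : p j₂ ≠ 0 := by
      intro h2
      have hs := hcom i0
      rw [h2, mul_zero, add_zero] at hs
      rcases mul_eq_zero.mp hs with h | h
      · exact hl i0 j₁ h
      · apply hp
        funext j
        rcases hall j with rfl | rfl | rfl <;> simp [hj₀, h2, h]
    have horder : ∀ i, T (l i j₁) + T (p j₁) = T (l i j₂) + T (p j₂) := by
      intro i
      have hs : l i j₁ * p j₁ = -(l i j₂ * p j₂) := by linear_combination hcom i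
      have := congrArg HahnSeries.order hs
      rw [HahnSeries.order_neg, HahnSeries.order_mul (hl i j₁) hp1,
        HahnSeries.order_mul (hl i j₂) hp2] at this
      simp only [T]; linarith
    have hkne : (Finset.univ : Finset (Fin k)).Nonempty := ⟨i0, Finset.mem_univ i0⟩
    set c : ℝ := Finset.univ.inf' hkne (fun i => T (l i j₁) + T (p j₁) - T (l i j₀)) with hc
    have hle : ∀ i, c ≤ T (l i j₁) + T (p j₁) - T (l i j₀) :=
      fun i => Finset.inf'_le _ (Finset.mem_univ i)
    refine ⟨fun j => if j = j₀ then c else T (p j), fun i => ?_⟩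
    have e0 : (if j₀ = j₀ then c else T (p j₀)) = c := if_pos rfl
    have e1 : (if j₁ = j₀ then c else T (p j₁)) = T (p j₁) := if_neg (fun h => h01 h.symm)
    have e2 : (if j₂ = j₀ then c else T (p j₂)) = T (p j₂) := if_neg (fun h => h02 h.symm)
    refine ⟨j₁, j₂, h12, ?_, ?_⟩
    · dsimp only
      rw [e1, e2]
      exact horder i
    · intro m
      dsimp only
      rcases hall m with rfl | rfl | rfl
      · rw [e0, e1]
        have := hle i
        linarith
      · exact le_rfl
      · rw [e1, e2]
        exact le_of_eq (horder i).symm
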